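/- If Γ is a group such that every element of Γ is a product of at most N commutators for some fixed N (Γ is uniformly perfect), then any real-valued quasimorphism on Γ that is a homomorphism must be bounded; equivalently, every homomorphism Γ → ℝ is trivial and, more generally, the comparison map from second bounded cohomology H²_b(Γ;ℝ) to ordinary cohomology H²(Γ;ℝ) is injective. -/

import Mathlib

open scoped commutatorElement

/-- if `Γ` is uniformly perfect (every element is a product of at most `N`
commutators), then every homomorphism `Γ → ℝ` is trivial and the comparison map
`H²_b(Γ;ℝ) → H²(Γ;ℝ)` is injective: any bounded 2-cocycle which is the coboundary of some
(arbitrary) 1-cochain is also the coboundary of a *bounded* 1-cochain. -/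
theorem uniformly_perfect_comparison_injective {Γ : Type*} [Group Γ] (N : ℕ)
    (hperf : ∀ γ : Γ, ∃ l : List (Γ × Γ), l.length ≤ N ∧
      γ = (l.map fun p => ⁅p.1, p.2⁆).prod) :
    (∀ φ : Γ → ℝ, (∀ a b : Γ, φ (a * b) = φ a + φ b) → ∀ γ : Γ, φ γ = 0) ∧
    (∀ τ : Γ → Γ → ℝ,
      (∀ a b c : Γ, τ a b + τ (a * b) c = τ b c + τ a (b * c)) →
      (∃ M : ℝ, ∀ a b : Γ, |τ a b| ≤ M) →
      ∀ d : Γ → ℝ, (∀ a b : Γ, τ a b = d a + d b - d (a * b)) →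
        ∃ b : Γ → ℝ, (∃ M : ℝ, ∀ γ : Γ, |b γ| ≤ M) ∧
          ∀ a c : Γ, τ a c = b a + b c - b (a * c)) := by
  constructor
  · intro φ hφ γ
    have h1 : φ 1 = 0 := by have := hφ 1 1; simp only [mul_one] at this; linarith
    have hinv : ∀ a : Γ, φ a⁻¹ = -φ a := by
      intro a
      have := hφ a a⁻¹
      rw [mul_inv_cancel, h1] at this
      linarith
    have hcomm : ∀ a b : Γ, φ ⁅a, b⁆ = 0 := by
      intro a b
      rw [commutatorElement_def, hφ, hφ, hφ, hinv, hinv]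
      ring
    obtain ⟨l, hlen, hl⟩ := hperf γ
    rw [hl]; clear hl hlen
    induction l with
    | nil => simpa using h1
    | cons p t ih =>
      rw [List.map_cons, List.prod_cons, hφ, hcomm, ih, add_zero]
  · rintro τ hco ⟨M, hM⟩ d hd
    have key : ∀ a b : Γ, |d a + d b - d (a * b)| ≤ M := by
      intro a b; rw [← hd]; exact hM a b
    have hM0 : 0 ≤ M := le_trans (abs_nonneg _) (hM 1 1)
    have h1 : |d 1| ≤ M := by
      have := key 1 1
      rw [mul_one] at this
      simpa using this
    have hcomm : ∀ a b : Γ, |d ⁅a, b⁆| ≤ 7 * M := by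
      intro a b
      have hk1 := abs_le.mp (key a b)
      have hk2 := abs_le.mp (key (a * b) a⁻¹)
      have hk3 := abs_le.mp (key (a * b * a⁻¹) b⁻¹)
      have ha := key a a⁻¹
      have hb := key b b⁻¹
      rw [mul_inv_cancel] at ha hb
      have ha' := abs_le.mp ha
      have hb' := abs_le.mp hb
      have h1' := abs_le.mp h1
      rw [commutatorElement_def, abs_le]
      constructor <;> linarith
    have hlist : ∀ l : List Γ, |d l.prod - (l.map d).sum| ≤ (l.length + 1) * M := by
      intro l
      induction l with
      | nil => simpa using h1
      | cons a t ih =>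
        have hk := abs_le.mp (key a t.prod)
        have ih' := abs_le.mp ih
        simp only [List.prod_cons, List.map_cons, List.sum_cons, List.length_cons]
        rw [abs_le]
        push_cast
        push_cast at ih'
        constructor <;> nlinarith
    have hsum : ∀ l : List (Γ × Γ),
        |((l.map fun p => ⁅p.1, p.2⁆).map d).sum| ≤ l.length * (7 * M) := by
      intro l
      induction l with
      | nil => simp
      | cons p t ih =>
        simp only [List.map_cons, List.sum_cons, List.length_cons]
        have h1' := hcomm p.1 p.2
        have h2' := abs_add_le (d ⁅p.1, p.2⁆) ((t.map fun p => ⁅p.1, p.2⁆).map d).sum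
        push_cast
        push_cast at ih
        nlinarith
    refine ⟨d, ⟨(8 * N + 1) * M, ?_⟩, fun a c => hd a c⟩
    intro γ
    obtain ⟨l, hlen, hγ⟩ := hperf γ
    have hl := hlist (l.map fun p => ⁅p.1, p.2⁆)
    have hs := hsum l
    rw [← hγ, List.length_map] at hl
    have hNl : (l.length : ℝ) ≤ N := by exact_mod_cast hlen
    have htri : |d γ| ≤ |d γ - ((l.map fun p => ⁅p.1, p.2⁆).map d).sum| +
        |((l.map fun p => ⁅p.1, p.2⁆).map d).sum| := by
      have := abs_add_le (d γ - ((l.map fun p => ⁅p.1, p.2⁆).map d).sum)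
        ((l.map fun p => ⁅p.1, p.2⁆).map d).sum
      simpa using this
    nlinarith
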